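/- Let A be symmetric positive definite with positive definite square root A^{1/2}, let Λ = L((A^{1/2})ᵀ) and Λ* = L(A^{-1/2}). If the ellipsoid E(A,a) contains an integer point, then the point x* = A^{1/2} z, where z is a closest vector in Λ* to the target A^{-1/2} a, is an integer point contained in E(A,a). -/

import Mathlib

open Matrix

/-- The ellipsoid `E(A,a) = {x : (x-a)ᵀ A⁻¹ (x-a) ≤ 1}`. -/
noncomputable def ell {n : ℕ} (A : Matrix (Fin n) (Fin n) ℝ) (a : Fin n → ℝ) :
    Set (Fin n → ℝ) :=
  {x | (x - a) ⬝ᵥ (A⁻¹ *ᵥ (x - a)) ≤ 1}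

/-- The old Mathlib `Matrix.PosSemidef.sqrt` (removed since), with its original definition. -/
noncomputable def PosSemidef.sqrtOld {n : ℕ} {A : Matrix (Fin n) (Fin n) ℝ} (hA : A.PosSemidef) :
    Matrix (Fin n) (Fin n) ℝ :=
  hA.1.eigenvectorUnitary.1 * diagonal ((↑) ∘ (√·) ∘ hA.1.eigenvalues) *
    (star hA.1.eigenvectorUnitary : Matrix (Fin n) (Fin n) ℝ)

theorem stmt9 {n : ℕ} (A : Matrix (Fin n) (Fin n) ℝ) (hA : A.PosDef) (a : Fin n → ℝ)
    (S : Matrix (Fin n) (Fin n) ℝ) (hS : S = PosSemidef.sqrtOld hA.posSemidef)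
    (hexists : ∃ w : Fin n → ℤ, (fun i => (w i : ℝ)) ∈ ell A a)
    (z : Fin n → ℝ)
    (hzlat : ∃ m : Fin n → ℤ, z = S⁻¹ *ᵥ fun i => (m i : ℝ))
    (hclosest : ∀ v : Fin n → ℝ, (∃ m : Fin n → ℤ, v = S⁻¹ *ᵥ fun i => (m i : ℝ)) →
      Real.sqrt ((z - S⁻¹ *ᵥ a) ⬝ᵥ (z - S⁻¹ *ᵥ a))
        ≤ Real.sqrt ((v - S⁻¹ *ᵥ a) ⬝ᵥ (v - S⁻¹ *ᵥ a))) :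
    (∀ i, ∃ k : ℤ, (S *ᵥ z) i = (k : ℝ)) ∧ S *ᵥ z ∈ ell A a := by
  have hSsq : S * S = A := by
    rw [hS]; unfold PosSemidef.sqrtOld
    have hU : (star hA.posSemidef.1.eigenvectorUnitary : Matrix (Fin n) (Fin n) ℝ) *
        hA.posSemidef.1.eigenvectorUnitary.1 = 1 := Unitary.coe_star_mul_self _
    have hsp := hA.posSemidef.1.spectral_theorem
    rw [Unitary.conjStarAlgAut_apply] at hsp
    conv_rhs => rw [hsp]
    simp only [Matrix.mul_assoc]
    rw [← Matrix.mul_assoc _ hA.posSemidef.1.eigenvectorUnitary.1, hU, Matrix.one_mul,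
      ← Matrix.mul_assoc (diagonal _), diagonal_mul_diagonal]
    congr 3
    funext i
    simp [Real.mul_self_sqrt (hA.posSemidef.eigenvalues_nonneg i)]
  have hSherm : S.IsHermitian := by
    rw [hS]; unfold PosSemidef.sqrtOld
    exact isHermitian_mul_mul_conjTranspose _ (isHermitian_diagonal _)
  have hAdet : IsUnit A.det := hA.det_pos.ne'.isUnit
  have hSdet : IsUnit S.det := by
    have : S.det * S.det = A.det := by rw [← Matrix.det_mul, hSsq]
    exact isUnit_of_mul_isUnit_left (this ▸ hAdet)
  have hSinv : S⁻¹ * S = 1 := Matrix.nonsing_inv_mul S hSdet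
  have hSinvR : S * S⁻¹ = 1 := Matrix.mul_nonsing_inv S hSdet
  have hAinv : A⁻¹ = S⁻¹ * S⁻¹ := by rw [← hSsq, Matrix.mul_inv_rev]
  have hSinvherm : (S⁻¹).IsHermitian := hSherm.inv
  -- quadratic form identity
  have key : ∀ u : Fin n → ℝ, u ⬝ᵥ (A⁻¹ *ᵥ u) = (S⁻¹ *ᵥ u) ⬝ᵥ (S⁻¹ *ᵥ u) := by
    intro u
    rw [hAinv, ← Matrix.mulVec_mulVec, Matrix.dotProduct_mulVec u S⁻¹,
      ← Matrix.mulVec_transpose]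
    have : (S⁻¹)ᵀ = S⁻¹ := by
      have := hSinvherm.eq
      simpa using this
    rw [this]
  obtain ⟨m, hm⟩ := hzlat
  have hSz : S *ᵥ z = fun i => (m i : ℝ) := by
    rw [hm, Matrix.mulVec_mulVec, hSinvR, Matrix.one_mulVec]
  refine ⟨fun i => ⟨m i, by rw [hSz]⟩, ?_⟩
  -- membership
  obtain ⟨w, hw⟩ := hexists
  have hvlat : ∃ m : Fin n → ℤ, S⁻¹ *ᵥ (fun i => (w i : ℝ)) = S⁻¹ *ᵥ fun i => (m i : ℝ) :=
    ⟨w, rfl⟩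
  have hcl := hclosest _ hvlat
  have hdiff : S⁻¹ *ᵥ (fun i => (w i : ℝ)) - S⁻¹ *ᵥ a
      = S⁻¹ *ᵥ ((fun i => (w i : ℝ)) - a) := by
    rw [Matrix.mulVec_sub]
  have hw' : ((fun i => (w i : ℝ)) - a) ⬝ᵥ (A⁻¹ *ᵥ ((fun i => (w i : ℝ)) - a)) ≤ 1 := hw
  rw [key] at hw'
  have hzdiff : z - S⁻¹ *ᵥ a = S⁻¹ *ᵥ (S *ᵥ z - a) := by
    rw [Matrix.mulVec_sub, Matrix.mulVec_mulVec, hSinv, Matrix.one_mulVec]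
  have goalquad : (S *ᵥ z - a) ⬝ᵥ (A⁻¹ *ᵥ (S *ᵥ z - a)) ≤ 1 := by
    rw [key, ← hzdiff]
    have h0 : (0:ℝ) ≤ (z - S⁻¹ *ᵥ a) ⬝ᵥ (z - S⁻¹ *ᵥ a) := by
      simpa [dotProduct, mul_self_nonneg] using
        Finset.sum_nonneg fun i _ => mul_self_nonneg ((z - S⁻¹ *ᵥ a) i)
    have hdv1 : (S⁻¹ *ᵥ (fun i => (w i : ℝ)) - S⁻¹ *ᵥ a) ⬝ᵥ
        (S⁻¹ *ᵥ (fun i => (w i : ℝ)) - S⁻¹ *ᵥ a) ≤ 1 := by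
      rw [hdiff]; exact hw'
    have := Real.sqrt_le_sqrt hdv1
    calc (z - S⁻¹ *ᵥ a) ⬝ᵥ (z - S⁻¹ *ᵥ a)
        = Real.sqrt ((z - S⁻¹ *ᵥ a) ⬝ᵥ (z - S⁻¹ *ᵥ a)) ^ 2 := (Real.sq_sqrt h0).symm
      _ ≤ Real.sqrt ((S⁻¹ *ᵥ (fun i => (w i : ℝ)) - S⁻¹ *ᵥ a) ⬝ᵥ
            (S⁻¹ *ᵥ (fun i => (w i : ℝ)) - S⁻¹ *ᵥ a)) ^ 2 := by
            exact pow_le_pow_left₀ (Real.sqrt_nonneg _) hcl 2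
      _ ≤ Real.sqrt 1 ^ 2 := by
            exact pow_le_pow_left₀ (Real.sqrt_nonneg _) (Real.sqrt_le_sqrt hdv1) 2
      _ = 1 := by simp
  exact goalquad
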